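/- Let h⁻ > 0, n ≥ 1, and suppose r : [T'', ∞) → ℝ is differentiable with r(T'') > n/h⁻ and r'(t) ≥ h⁻ − n/r(t) for all t ≥ T''. Then r is nondecreasing, stays above n/h⁻, satisfies r(t) + (n/h⁻)·log(h⁻·r(t) − n) ≥ h⁻·(t − T'') + r(T'') + (n/h⁻)·log(h⁻·r(T'') − n) for all t ≥ T'', and r(t) → ∞ as t → ∞. -/

import Mathlib

open Set Filter


/-- Expansion comparison (Lemma 11 / Section 6): if `r(T'') > n/h⁻` and
`r' ≥ h⁻ − n/r` on `[T'', ∞)`, then `r` is nondecreasing, stays above `n/h⁻`,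
satisfies the integrated logarithmic inequality, and tends to infinity. -/
theorem stmt10 (n : ℕ) (hn : 1 ≤ n) (hm Tpp : ℝ) (hhm : 0 < hm)
    (r r' : ℝ → ℝ)
    (hinit : n / hm < r Tpp)
    (hderiv : ∀ t, Tpp ≤ t → HasDerivAt r (r' t) t)
    (hge : ∀ t, Tpp ≤ t → hm - n / r t ≤ r' t) :
    MonotoneOn r (Set.Ici Tpp) ∧
    (∀ t, Tpp ≤ t → n / hm < r t) ∧
    (∀ t, Tpp ≤ t →
      hm * (t - Tpp) + r Tpp + (n / hm) * Real.log (hm * r Tpp - n)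
        ≤ r t + (n / hm) * Real.log (hm * r t - n)) ∧
    Filter.Tendsto r Filter.atTop Filter.atTop := by
  have hn' : (0:ℝ) < n := by exact_mod_cast Nat.lt_of_lt_of_le Nat.zero_lt_one hn
  set b : ℝ := n / hm with hb
  have hb0 : 0 < b := div_pos hn' hhm
  set c : ℝ := r Tpp with hc
  set m : ℝ := (b + c) / 2 with hmdef
  have hbm : b < m := by simp only [hmdef]; linarith
  have hmc : m < c := by simp only [hmdef]; linarith
  have hm0 : 0 < m := lt_trans hb0 hbm
  -- derivative positivity when r x > b
  have hderivpos : ∀ x, Tpp ≤ x → b < r x → 0 < r' x := by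
    intro x hx hrx
    have h1 : n / r x < hm := by
      rw [div_lt_iff₀ (lt_trans hb0 hrx)]
      rw [hb, div_lt_iff₀ hhm] at hrx
      linarith
    have := hge x hx
    linarith
  -- continuity on Ici
  have hcont : ∀ s ⊆ Ici Tpp, ContinuousOn r s := fun s hs x hx =>
    ((hderiv x (hs hx)).continuousAt).continuousWithinAt
  -- key invariance: r t > m for all t ≥ Tpp
  have hkey : ∀ t, Tpp ≤ t → m < r t := by
    intro t ht
    by_contra hcon
    push_neg at hcon
    set S : Set ℝ := {s | Tpp ≤ s ∧ r s ≤ m} with hS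
    have hSne : S.Nonempty := ⟨t, ht, hcon⟩
    have hSbdd : BddBelow S := ⟨Tpp, fun s hs => hs.1⟩
    set t₁ : ℝ := sInf S with ht₁
    have ht₁cl : t₁ ∈ closure S := csInf_mem_closure hSne hSbdd
    have hSsub : S ⊆ Ici Tpp := fun s hs => hs.1
    have ht₁ge : Tpp ≤ t₁ := le_csInf hSne (fun s hs => hs.1)
    have hrt₁ : r t₁ ≤ m := by
      have : r t₁ ∈ closure (Iic m) :=
        (((hderiv t₁ ht₁ge).continuousAt).continuousWithinAt).mem_closure ht₁cl
          (fun s hs => hs.2)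
      simpa using this
    have ht₁gt : Tpp < t₁ := by
      rcases lt_or_eq_of_le ht₁ge with h | h
      · exact h
      · exfalso; rw [← h] at hrt₁; rw [← hc] at hrt₁; linarith
    -- on (Tpp, t₁), points are not in S, so r x > m
    have hnotS : ∀ x ∈ Ioo Tpp t₁, m < r x := by
      intro x ⟨hx1, hx2⟩
      by_contra hcx
      push_neg at hcx
      exact absurd (csInf_le hSbdd ⟨le_of_lt hx1, hcx⟩) (not_le.mpr hx2)
    have hsm : StrictMonoOn r (Icc Tpp t₁) := by
      apply strictMonoOn_of_deriv_pos (convex_Icc _ _)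
        (hcont _ (fun x hx => hx.1))
      intro x hx
      rw [interior_Icc] at hx
      have hrx : b < r x := lt_trans hbm (hnotS x hx)
      rw [(hderiv x (le_of_lt hx.1)).deriv]
      exact hderivpos x (le_of_lt hx.1) hrx
    have := hsm (left_mem_Icc.mpr (le_of_lt ht₁gt)) (right_mem_Icc.mpr (le_of_lt ht₁gt)) ht₁gt
    rw [← hc] at this
    linarith
  have hbr : ∀ t, Tpp ≤ t → b < r t := fun t ht => lt_trans hbm (hkey t ht)
  have hderivpos' : ∀ x ∈ interior (Ici Tpp), 0 < deriv r x := by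
    intro x hx
    rw [interior_Ici] at hx
    rw [(hderiv x (le_of_lt hx)).deriv]
    exact hderivpos x (le_of_lt hx) (hbr x (le_of_lt hx))
  have hmono : StrictMonoOn r (Ici Tpp) :=
    strictMonoOn_of_deriv_pos (convex_Ici _) (hcont _ (subset_refl _)) hderivpos'
  refine ⟨hmono.monotoneOn, hbr, ?_, ?_⟩
  · -- log inequality
    set g : ℝ → ℝ := fun t => r t + (n / hm) * Real.log (hm * r t - n) - hm * t with hg
    have hA : ∀ x, Tpp ≤ x → 0 < hm * r x - n := by
      intro x hx
      have := hbr x hx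
      rw [hb, div_lt_iff₀ hhm] at this
      linarith
    have hgderiv : ∀ x, Tpp ≤ x →
        HasDerivAt g (r' x + (n / hm) * ((hm * r' x) / (hm * r x - n)) - hm) x := by
      intro x hx
      have h1 : HasDerivAt (fun t => hm * r t - n) (hm * r' x) x :=
        ((hderiv x hx).const_mul hm).sub_const _
      have h2 : HasDerivAt (fun t => Real.log (hm * r t - n))
          ((hm * r' x) / (hm * r x - n)) x := h1.log (ne_of_gt (hA x hx))
      have h3 := ((hderiv x hx).add (h2.const_mul ((n:ℝ)/hm))).sub
        ((hasDerivAt_id x).const_mul hm)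
      exact h3.congr_deriv (by ring)
    have hgmono : MonotoneOn g (Ici Tpp) := by
      apply monotoneOn_of_deriv_nonneg (convex_Ici _)
      · intro x hx
        exact ((hgderiv x hx).continuousAt).continuousWithinAt
      · intro x hx
        rw [interior_Ici] at hx
        exact ((hgderiv x (le_of_lt hx)).differentiableAt).differentiableWithinAt
      · intro x hx
        rw [interior_Ici] at hx
        have hx' := le_of_lt (show Tpp < x from hx)
        rw [(hgderiv x hx').deriv]
        have hA' := hA x hx'
        have hR : 0 < r x := lt_trans hb0 (hbr x hx')
        have hge' := hge x hx'
        have hdiv : (n : ℝ) / r x * r x = n := div_mul_cancel₀ _ (ne_of_gt hR)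
        have hr'R : hm * r x - n ≤ r' x * r x := by nlinarith
        have hr'pos : 0 < r' x := hderivpos x hx' (hbr x hx')
        rw [sub_nonneg]
        have h5 : (n:ℝ)/hm * (hm * r' x / (hm * r x - n)) = n * r' x / (hm * r x - n) := by
          field_simp
        rw [h5, ← sub_le_iff_le_add', le_div_iff₀ hA']
        nlinarith [mul_le_mul_of_nonneg_left hr'R (le_of_lt hhm)]
    intro t ht
    have hgle := hgmono (Set.self_mem_Ici) ht ht
    simp only [hg] at hgle
    linarith
  · -- tendsto
    set d : ℝ := hm - n / m with hd
    have hd0 : 0 < d := by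
      have : (n:ℝ) / m < hm := by
        rw [div_lt_iff₀ hm0]
        rw [hb, div_lt_iff₀ hhm] at hbm
        linarith
      simp only [hd]; linarith
    have hlin : ∀ t, Tpp ≤ t → d * t + (r Tpp - d * Tpp) ≤ r t := by
      have hψ : MonotoneOn (fun t => r t - d * t) (Ici Tpp) := by
        apply monotoneOn_of_deriv_nonneg (convex_Ici _)
        · intro x hx
          exact (((hderiv x hx).sub ((hasDerivAt_id x).const_mul d)).continuousAt).continuousWithinAt
        · intro x hx
          rw [interior_Ici] at hx
          exact (((hderiv x (le_of_lt hx)).sub ((hasDerivAt_id x).const_mul d)).differentiableAt).differentiableWithinAt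
        · intro x hx
          rw [interior_Ici] at hx
          have hx' := le_of_lt (show Tpp < x from hx)
          have hDA : HasDerivAt (fun t => r t - d * t) (r' x - d) x := by
            exact ((hderiv x hx').sub ((hasDerivAt_id x).const_mul d)).congr_deriv (by ring)
          rw [hDA.deriv]
          have h1 : (n:ℝ) / r x ≤ n / m :=
            div_le_div_of_nonneg_left (le_of_lt hn') hm0 (le_of_lt (hkey x hx'))
          have := hge x hx'
          simp only [hd, id]
          linarith
      intro t ht
      have h2 : r Tpp - d * Tpp ≤ r t - d * t := hψ Set.self_mem_Ici ht ht
      linarith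
    have hcomp : Filter.Tendsto (fun t => d * t + (r Tpp - d * Tpp)) Filter.atTop Filter.atTop :=
      Filter.tendsto_atTop_add_const_right _ _
        (Filter.Tendsto.const_mul_atTop hd0 Filter.tendsto_id)
    refine Filter.tendsto_atTop_mono' _ ?_ hcomp
    filter_upwards [Filter.eventually_ge_atTop Tpp] with t ht
    exact hlin t ht
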